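/- Let A and B be nonnegative selfadjoint bounded linear operators on a complex Hilbert space and let r ∈ (0, 1] be a real number. Then ‖A^r − B^r‖ ≤ ‖A − B‖^r. -/

import Mathlib

open scoped NNReal ENNReal

section LoewnerHeinz

lemma my_spectralRadius_mul_comm {B : Type*} [NormedRing B] [NormedAlgebra ℂ B] (a b : B) :
    spectralRadius ℂ (a * b) = spectralRadius ℂ (b * a) := by
  have key : ∀ x y : B, spectralRadius ℂ (x * y) ≤ spectralRadius ℂ (y * x) := by
    intro x y
    rw [spectralRadius, spectralRadius]
    refine iSup₂_le fun k hk => ?_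
    rcases eq_or_ne k 0 with rfl | h
    · simp
    · have hk' : k ∈ spectrum ℂ (y * x) := by
        have := (spectrum.unit_mem_mul_comm
          (a := x) (b := y) (r := Units.mk0 k h)).mp (by simpa using hk)
        simpa using this
      exact le_iSup₂ (f := fun k (_ : k ∈ spectrum ℂ (y * x)) => (‖k‖₊ : ℝ≥0∞)) k hk'
  exact le_antisymm (key a b) (key b a)

variable {A : Type*} [CStarAlgebra A] [PartialOrder A] [StarOrderedRing A]

variable {A : Type*} [CStarAlgebra A] [PartialOrder A] [StarOrderedRing A]

lemma my_continuous_rpow {a : A} (ha : 0 ≤ a) (h0 : 0 ∉ spectrum ℝ≥0 a) :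
    Continuous fun s : ℝ => CFC.rpow a s := by
  have hne : ∀ x : spectrum ℝ≥0 a, (x : ℝ≥0) ≠ 0 := fun x hx => h0 (hx ▸ x.2)
  have hcont : ∀ s : ℝ, ContinuousOn (fun x : ℝ≥0 => x ^ s) (spectrum ℝ≥0 a) := fun s x hx =>
    (NNReal.continuousAt_rpow_const (Or.inl (hne ⟨x, hx⟩))).continuousWithinAt
  have hF : Continuous fun s : ℝ =>
      (⟨(spectrum ℝ≥0 a).restrict (fun x : ℝ≥0 => x ^ s), (hcont s).restrict⟩ :
        C(spectrum ℝ≥0 a, ℝ≥0)) := by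
    apply ContinuousMap.continuous_of_continuous_uncurry
    rw [continuous_iff_continuousAt]
    rintro ⟨s, x⟩
    have h1 : ContinuousAt (fun p : ℝ≥0 × ℝ => p.1 ^ p.2) ((x : ℝ≥0), s) :=
      NNReal.continuousAt_rpow (Or.inl (hne x))
    have h2 : Continuous fun p : ℝ × spectrum ℝ≥0 a => ((p.2 : ℝ≥0), p.1) := by fun_prop
    exact ContinuousAt.comp (x := ((s, x) : ℝ × spectrum ℝ≥0 a)) h1 h2.continuousAt
  have := (cfcHom_isClosedEmbedding (R := ℝ≥0) ha).continuous.comp hF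
  refine this.congr fun s => ?_
  exact (cfc_apply (fun x : ℝ≥0 => x ^ s) a ha (hcont s)).symm

lemma my_isUnit_rpow' {a : A} (hu : IsUnit a) (s : ℝ) (ha : 0 ≤ a) :
    IsUnit (a ^ s) := by
  lift a to Aˣ using hu
  have h0 := a.zero_notMem_spectrum ℝ≥0
  exact ⟨⟨(a : A) ^ s, (a : A) ^ (-s),
    CFC.rpow_mul_rpow_neg s (Units.isStrictlyPositive_of_le ha), CFC.rpow_neg_mul_rpow s (Units.isStrictlyPositive_of_le ha)⟩, rfl⟩

lemma my_le_iff_norm {a b : A} (hua : IsUnit a) (hub : IsUnit b) (ha : 0 ≤ a) (hb : 0 ≤ b)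
    {s : ℝ} (hs : s ≠ 0) :
    a ^ (2 * s) ≤ b ^ (2 * s) ↔ ‖a ^ s * b ^ (-s)‖ ≤ 1 := by
  have ha0 : (0 : ℝ≥0) ∉ spectrum ℝ≥0 a := by
    lift a to Aˣ using hua; exact a.zero_notMem_spectrum ℝ≥0
  have hb0 : (0 : ℝ≥0) ∉ spectrum ℝ≥0 b := by
    lift b to Aˣ using hub; exact b.zero_notMem_spectrum ℝ≥0
  have h2s : (2 : ℝ) * s ≠ 0 := by simpa using hs
  have key := le_iff_norm_sqrt_mul_rpow (a := a ^ (2 * s)) (b := b ^ (2 * s))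
    CFC.rpow_nonneg ((my_isUnit_rpow' hub _ hb).isStrictlyPositive CFC.rpow_nonneg)
  rw [key, CFC.sqrt_rpow hua h2s, CFC.rpow_rpow b _ _ h2s (hub.isStrictlyPositive hb),
    show 2 * s * (-(1 / 2)) = -s by ring, show 2 * s / 2 = s by ring]

lemma my_midpoint [Nontrivial A] {a b : A} (hua : IsUnit a) (hub : IsUnit b) (ha : 0 ≤ a) (hb : 0 ≤ b)
    {s t : ℝ}
    (hs : ‖a ^ s * b ^ (-s)‖ ≤ 1)
    (ht : ‖a ^ t * b ^ (-t)‖ ≤ 1) :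
    ‖a ^ ((s + t) / 2) * b ^ (-((s + t) / 2))‖ ≤ 1 := by
  lift a to Aˣ using hua
  lift b to Aˣ using hub
  have ha0 := a.zero_notMem_spectrum ℝ≥0
  have hb0 := b.zero_notMem_spectrum ℝ≥0
  set m : ℝ := (s + t) / 2 with hm
  set X : A := (a : A) ^ m * (b : A) ^ (-m) with hX
  have sa : ∀ (c : A) (u : ℝ), star (c ^ u) = c ^ u := fun c u =>
    IsSelfAdjoint.of_nonneg CFC.rpow_nonneg
  -- star X * X = b^{-m} * (a^{2m} * b^{-2m} ... )
  have hXX : star X * X = (b : A) ^ (-m) * ((a : A) ^ (s + t) * (b : A) ^ (-m)) := by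
    rw [hX, star_mul, sa, sa]
    have : (a : A) ^ m * (a : A) ^ m = (a : A) ^ (s + t) := by
      rw [← CFC.rpow_add a.isUnit]; norm_num [hm]
    calc (b : A) ^ (-m) * (a : A) ^ m * ((a : A) ^ m * (b : A) ^ (-m))
        = (b : A) ^ (-m) * (((a : A) ^ m * (a : A) ^ m) * (b : A) ^ (-m)) := by
          simp only [mul_assoc]
      _ = _ := by rw [this]
  -- spectral radius computation
  have hswap1 : spectralRadius ℂ (star X * X)
      = spectralRadius ℂ ((a : A) ^ (s + t) * (b : A) ^ (-(s + t))) := by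
    rw [hXX, my_spectralRadius_mul_comm]
    congr 1
    rw [mul_assoc, ← CFC.rpow_add b.isUnit]
    congr 1
    congr 1; rw [hm]; ring
  have hsplit : (a : A) ^ (s + t) * (b : A) ^ (-(s + t))
      = (a : A) ^ s * ((a : A) ^ t * (b : A) ^ (-t) * (b : A) ^ (-s)) := by
    rw [CFC.rpow_add a.isUnit, show -(s + t) = -t + -s by ring, CFC.rpow_add b.isUnit]
    simp only [mul_assoc]
  have hswap2 : spectralRadius ℂ (star X * X)
      = spectralRadius ℂ (((a : A) ^ t * (b : A) ^ (-t)) * ((b : A) ^ (-s) * (a : A) ^ s)) := by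
    rw [hswap1, hsplit, my_spectralRadius_mul_comm]
    simp only [mul_assoc]
  -- now bound
  have hb1 : ‖(b : A) ^ (-s) * (a : A) ^ s‖₊ ≤ 1 := by
    have : (b : A) ^ (-s) * (a : A) ^ s = star ((a : A) ^ s * (b : A) ^ (-s)) := by
      rw [star_mul, sa, sa]
    rw [this, nnnorm_star]
    exact_mod_cast hs
  have ht1 : ‖(a : A) ^ t * (b : A) ^ (-t)‖₊ ≤ 1 := by exact_mod_cast ht
  have hbound : (‖star X * X‖₊ : ℝ≥0∞) ≤ 1 := by
    have hsa : IsSelfAdjoint (star X * X) := IsSelfAdjoint.star_mul_self X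
    rw [hsa.spectralRadius_eq_nnnorm] at hswap2
    calc (‖star X * X‖₊ : ℝ≥0∞)
        = spectralRadius ℂ (((a : A) ^ t * (b : A) ^ (-t)) * ((b : A) ^ (-s) * (a : A) ^ s)) := hswap2
      _ ≤ ‖((a : A) ^ t * (b : A) ^ (-t)) * ((b : A) ^ (-s) * (a : A) ^ s)‖₊ :=
          spectrum.spectralRadius_le_nnnorm _
      _ ≤ (‖(a : A) ^ t * (b : A) ^ (-t)‖₊ * ‖(b : A) ^ (-s) * (a : A) ^ s‖₊ : ℝ≥0) := by
          exact_mod_cast ENNReal.coe_le_coe.mpr (nnnorm_mul_le _ _)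
      _ ≤ (1 : ℝ≥0∞) := by
          rw [show (1 : ℝ≥0∞) = ((1 : ℝ≥0) : ℝ≥0∞) by simp]
          exact_mod_cast mul_le_one' ht1 hb1
  have hXX1 : ‖X‖ * ‖X‖ ≤ 1 := by
    rw [← CStarRing.norm_star_mul_self]
    have : ‖star X * X‖₊ ≤ 1 := by exact_mod_cast hbound
    exact_mod_cast this
  nlinarith [norm_nonneg X]

lemma my_rpow_le_rpow_unit [Nontrivial A] {a b : A} (hua : IsUnit a) (hub : IsUnit b)
    (ha : 0 ≤ a) (hb : 0 ≤ b) (hab : a ≤ b) {r : ℝ} (hr0 : 0 < r) (hr1 : r ≤ 1) :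
    a ^ r ≤ b ^ r := by
  have ha0 : (0 : ℝ≥0) ∉ spectrum ℝ≥0 a := by
    lift a to Aˣ using hua; exact a.zero_notMem_spectrum ℝ≥0
  have hb0 : (0 : ℝ≥0) ∉ spectrum ℝ≥0 b := by
    lift b to Aˣ using hub; exact b.zero_notMem_spectrum ℝ≥0
  set Q : ℝ → Prop := fun s => ‖a ^ s * b ^ (-s)‖ ≤ 1 with hQ
  have hQ0 : Q 0 := by
    simp only [hQ, neg_zero, CFC.rpow_zero a ha, CFC.rpow_zero b hb, mul_one, norm_one, le_refl]
  have hQhalf : Q (1 / 2) := by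
    have := (my_le_iff_norm hua hub ha hb (s := (1:ℝ)/2) (by norm_num)).mp
    simp only [show (2 : ℝ) * (1 / 2) = 1 by norm_num, CFC.rpow_one a ha, CFC.rpow_one b hb] at this
    exact this hab
  -- dyadic step
  have hdy : ∀ n k : ℕ, k ≤ 2 ^ n → Q ((k : ℝ) / 2 ^ (n + 1)) := by
    intro n
    induction n with
    | zero =>
      intro k hk
      interval_cases k
      · simpa using hQ0
      · norm_num
        exact hQhalf
    | succ n ih =>
      intro k hk
      rcases Nat.even_or_odd k with ⟨j, hj⟩ | ⟨j, hj⟩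
      · have hjle : j ≤ 2 ^ n := by omega
        have : (k : ℝ) / 2 ^ (n + 2) = (j : ℝ) / 2 ^ (n + 1) := by
          subst hj; push_cast; ring
        rw [this]
        exact ih j hjle
      · have hj1 : j + 1 ≤ 2 ^ n := by omega
        have e : (k : ℝ) / 2 ^ (n + 2)
            = (((j : ℝ) / 2 ^ (n + 1)) + ((j + 1 : ℕ) : ℝ) / 2 ^ (n + 1)) / 2 := by
          subst hj; push_cast; ring
        rw [e]
        exact my_midpoint hua hub ha hb (ih j (by omega)) (ih (j + 1) hj1)
  -- closure: all s in [0, 1/2]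
  have hQall : ∀ s : ℝ, 0 ≤ s → s ≤ 1 / 2 → Q s := by
    intro s hs0 hs1
    have hcont : Continuous fun s : ℝ => ‖a ^ s * b ^ (-s)‖ :=
      ((my_continuous_rpow ha ha0).mul
        ((my_continuous_rpow hb hb0).comp continuous_neg)).norm
    set u : ℕ → ℝ := fun n => (⌊s * 2 ^ (n + 1)⌋₊ : ℝ) / 2 ^ (n + 1) with hu
    have hQu : ∀ n, Q (u n) := by
      intro n
      apply hdy n
      have h1 : s * 2 ^ (n + 1) ≤ ((2 ^ n : ℕ) : ℝ) := by
        push_cast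
        calc s * 2 ^ (n + 1) ≤ (1 / 2) * 2 ^ (n + 1) := by
              exact mul_le_mul_of_nonneg_right hs1 (by positivity)
          _ = 2 ^ n := by ring
      calc ⌊s * 2 ^ (n + 1)⌋₊ ≤ ⌊((2 ^ n : ℕ) : ℝ)⌋₊ := Nat.floor_mono h1
        _ = 2 ^ n := Nat.floor_natCast _
    have hulim : Filter.Tendsto u Filter.atTop (nhds s) := by
      have hlow : ∀ n, s - (2 : ℝ)⁻¹ ^ (n + 1) ≤ u n := by
        intro n
        have := Nat.lt_floor_add_one (s * 2 ^ (n + 1))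
        rw [hu]
        have h2 : (0:ℝ) < 2 ^ (n + 1) := by positivity
        rw [le_div_iff₀ h2]
        have : s * 2 ^ (n + 1) - 1 ≤ (⌊s * 2 ^ (n + 1)⌋₊ : ℝ) := by
          have := Nat.lt_floor_add_one (s * 2 ^ (n + 1))
          linarith
        calc (s - (2 : ℝ)⁻¹ ^ (n + 1)) * 2 ^ (n + 1)
            = s * 2 ^ (n + 1) - 1 := by
              rw [inv_pow]
              field_simp
          _ ≤ _ := this
      have hhigh : ∀ n, u n ≤ s := by
        intro n
        rw [hu]
        have h2 : (0:ℝ) < 2 ^ (n + 1) := by positivity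
        rw [div_le_iff₀ h2]
        exact Nat.floor_le (by positivity)
      have hl : Filter.Tendsto (fun n : ℕ => s - (2 : ℝ)⁻¹ ^ (n + 1)) Filter.atTop (nhds s) := by
        have h0 : Filter.Tendsto (fun n : ℕ => (2 : ℝ)⁻¹ ^ (n + 1)) Filter.atTop (nhds 0) := by
          have := (tendsto_pow_atTop_nhds_zero_of_lt_one (by norm_num : (0:ℝ) ≤ 2⁻¹)
            (by norm_num : (2:ℝ)⁻¹ < 1)).comp (Filter.tendsto_add_atTop_nat 1)
          exact this
        simpa using (tendsto_const_nhds (x := s)).sub h0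
      exact tendsto_of_tendsto_of_tendsto_of_le_of_le hl tendsto_const_nhds hlow hhigh
    have : Filter.Tendsto (fun n => ‖a ^ u n * b ^ (-u n)‖) Filter.atTop
        (nhds ‖a ^ s * b ^ (-s)‖) := (hcont.tendsto s).comp hulim
    exact le_of_tendsto this (Filter.Eventually.of_forall hQu)
  -- conclude
  have hQr : Q (r / 2) := hQall (r / 2) (by linarith) (by linarith)
  have := (my_le_iff_norm hua hub ha hb (s := r / 2) (by positivity)).mpr hQr
  rwa [show 2 * (r / 2) = r by ring] at this

lemma my_cfc_add_const (b : A) (c : ℝ≥0) (hb : 0 ≤ b) :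
    cfc (fun x : ℝ≥0 => x + c) b = b + algebraMap ℝ≥0 A c := by
  have := cfc_add (R := ℝ≥0) b id (fun _ => c) (by fun_prop) (by fun_prop)
  rw [show (fun x : ℝ≥0 => x + c) = (fun x : ℝ≥0 => id x + (fun _ : ℝ≥0 => c) x) from rfl, this,
    cfc_id ℝ≥0 b hb, cfc_const c b hb]

lemma my_rpow_comp_add_const (b : A) (c : ℝ≥0) (hb : 0 ≤ b) {r : ℝ} (hr0 : 0 < r) :
    (b + algebraMap ℝ≥0 A c) ^ r = cfc (fun x : ℝ≥0 => (x + c) ^ r) b := by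
  rw [← my_cfc_add_const b c hb, CFC.rpow_def]
  exact (cfc_comp (fun x : ℝ≥0 => x ^ r) (fun x : ℝ≥0 => x + c) b hb
    ((NNReal.continuous_rpow_const hr0.le).continuousOn) (by fun_prop)).symm

lemma my_rpow_add_const_le (b : A) (c : ℝ≥0) (hb : 0 ≤ b) {r : ℝ} (hr0 : 0 < r) (hr1 : r ≤ 1) :
    (b + algebraMap ℝ≥0 A c) ^ r ≤ b ^ r + algebraMap ℝ≥0 A (c ^ r) := by
  rw [my_rpow_comp_add_const b c hb hr0]
  calc cfc (fun x : ℝ≥0 => (x + c) ^ r) b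
      ≤ cfc (fun x : ℝ≥0 => x ^ r + c ^ r) b := by
        refine cfc_mono (fun x _ => NNReal.rpow_add_le_add_rpow x c hr0.le hr1) ?_ ?_
        · exact (((NNReal.continuous_rpow_const hr0.le).comp (by fun_prop)).continuousOn)
        · exact (((NNReal.continuous_rpow_const hr0.le).add continuous_const).continuousOn)
    _ = b ^ r + algebraMap ℝ≥0 A (c ^ r) := by
        rw [cfc_add (R := ℝ≥0) b (fun x => x ^ r) (fun _ => c ^ r)
          ((NNReal.continuous_rpow_const hr0.le).continuousOn) (by fun_prop),
          cfc_const (c ^ r) b hb, CFC.rpow_def]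

lemma my_le_rpow_add_const (b : A) (c : ℝ≥0) (hb : 0 ≤ b) {r : ℝ} (hr0 : 0 < r) :
    b ^ r ≤ (b + algebraMap ℝ≥0 A c) ^ r := by
  rw [my_rpow_comp_add_const b c hb hr0, CFC.rpow_def]
  refine cfc_mono (fun x _ => NNReal.rpow_le_rpow (le_add_right le_rfl) hr0.le) ?_ ?_
  · exact (NNReal.continuous_rpow_const hr0.le).continuousOn
  · exact (((NNReal.continuous_rpow_const hr0.le).comp (by fun_prop)).continuousOn)

lemma my_algebraMap_nonneg (c : ℝ≥0) : (0 : A) ≤ algebraMap ℝ≥0 A c := by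
  rw [← cfc_const c (0 : A) le_rfl]
  exact cfc_predicate _ _

lemma my_rpow_le_rpow {a b : A} (ha : 0 ≤ a) (hab : a ≤ b) {r : ℝ} (hr0 : 0 < r) (hr1 : r ≤ 1) :
    a ^ r ≤ b ^ r := by
  rcases subsingleton_or_nontrivial A with hsub | hnt
  · exact le_of_eq (Subsingleton.elim _ _)
  have hb : 0 ≤ b := ha.trans hab
  have key : ∀ ε : ℝ≥0, 0 < ε → a ^ r ≤ b ^ r + algebraMap ℝ≥0 A (ε ^ r) := by
    intro ε hε
    have hmap0 : (0 : A) ≤ algebraMap ℝ≥0 A ε := my_algebraMap_nonneg ε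
    have hmapu : IsUnit (algebraMap ℝ≥0 A ε) := (hε.ne'.isUnit).map (algebraMap ℝ≥0 A)
    have hua : IsUnit (a + algebraMap ℝ≥0 A ε) :=
      CStarAlgebra.isUnit_of_le _ ((le_add_iff_nonneg_left _).mpr ha) (hmapu.isStrictlyPositive hmap0)
    have hub : IsUnit (b + algebraMap ℝ≥0 A ε) :=
      CStarAlgebra.isUnit_of_le _ ((le_add_iff_nonneg_left _).mpr hb) (hmapu.isStrictlyPositive hmap0)
    calc a ^ r ≤ (a + algebraMap ℝ≥0 A ε) ^ r := my_le_rpow_add_const a ε ha hr0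
      _ ≤ (b + algebraMap ℝ≥0 A ε) ^ r :=
          my_rpow_le_rpow_unit hua hub (add_nonneg ha hmap0) (add_nonneg hb hmap0)
            (add_le_add hab le_rfl) hr0 hr1
      _ ≤ b ^ r + algebraMap ℝ≥0 A (ε ^ r) := my_rpow_add_const_le b ε hb hr0 hr1
  have hlim : Filter.Tendsto (fun ε : ℝ≥0 => b ^ r + algebraMap ℝ≥0 A (ε ^ r))
      (nhdsWithin 0 (Set.Ioi 0)) (nhds (b ^ r)) := by
    have h1 : Filter.Tendsto (fun ε : ℝ≥0 => ε ^ r) (nhds 0) (nhds 0) := by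
      have h := (NNReal.continuousAt_rpow_const (x := 0) (y := r) (Or.inr hr0.le))
      simpa [NNReal.zero_rpow hr0.ne'] using h.tendsto
    have h2 : Continuous (algebraMap ℝ≥0 A) := continuous_algebraMap ℝ≥0 A
    have h3 := (h2.tendsto 0).comp h1
    rw [map_zero] at h3
    have := (tendsto_const_nhds (x := b ^ r)).add h3
    rw [add_zero] at this
    exact this.mono_left nhdsWithin_le_nhds
  exact ge_of_tendsto hlim (Filter.eventually_of_mem self_mem_nhdsWithin fun ε hε => key ε hε)

lemma my_norm_le_of_le_algebraMap {x : A} (hx : IsSelfAdjoint x) {t : ℝ} (ht : 0 ≤ t)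
    (h1 : x ≤ algebraMap ℝ A t) (h2 : -x ≤ algebraMap ℝ A t) : ‖x‖ ≤ t := by
  have h1' : ∀ μ ∈ spectrum ℝ x, μ ≤ t := by
    have h : cfc (id : ℝ → ℝ) x ≤ cfc (fun _ : ℝ => t) x := by
      rwa [cfc_id ℝ x hx, cfc_const t x hx]
    exact fun μ hμ => by
      simpa using (cfc_le_iff (id : ℝ → ℝ) (fun _ => t) x (by fun_prop) (by fun_prop) hx).mp h μ hμ
  have h2' : ∀ μ ∈ spectrum ℝ x, -t ≤ μ := by
    have h : cfc (fun y : ℝ => -(id y)) x ≤ cfc (fun _ : ℝ => t) x := by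
      rw [cfc_neg (id : ℝ → ℝ) x, cfc_id ℝ x hx, cfc_const t x hx]
      exact h2
    intro μ hμ
    have := (cfc_le_iff (fun y : ℝ => -(id y)) (fun _ => t) x (by fun_prop) (by fun_prop) hx).mp h μ hμ
    simp only [id] at this
    linarith
  conv_lhs => rw [← cfc_id ℝ x hx]
  exact norm_cfc_le ht fun μ hμ => by
    rw [id, Real.norm_eq_abs, abs_le]
    exact ⟨h2' μ hμ, h1' μ hμ⟩

theorem my_main {a b : A} (ha : 0 ≤ a) (hb : 0 ≤ b) {r : ℝ} (hr0 : 0 < r) (hr1 : r ≤ 1) :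
    ‖a ^ r - b ^ r‖ ≤ ‖a - b‖ ^ r := by
  have one_side : ∀ x y : A, 0 ≤ x → 0 ≤ y → ‖x - y‖₊ = ‖a - b‖₊ →
      x ^ r - y ^ r ≤ algebraMap ℝ≥0 A (‖a - b‖₊ ^ r) := by
    intro x y hx hy hxy
    have hsx : IsSelfAdjoint x := .of_nonneg hx
    have hsy : IsSelfAdjoint y := .of_nonneg hy
    have hmap : algebraMap ℝ A ‖x - y‖ = algebraMap ℝ≥0 A ‖a - b‖₊ := by
      rw [IsScalarTower.algebraMap_apply ℝ≥0 ℝ A, ← hxy]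
      norm_cast
    have hle : x ≤ y + algebraMap ℝ≥0 A ‖a - b‖₊ := by
      have := (hsx.sub hsy).le_algebraMap_norm_self
      rw [hmap] at this
      exact sub_le_iff_le_add'.mp this
    have h1 : x ^ r ≤ (y + algebraMap ℝ≥0 A ‖a - b‖₊) ^ r := my_rpow_le_rpow hx hle hr0 hr1
    have h2 := my_rpow_add_const_le y (‖a - b‖₊) hy hr0 hr1
    exact sub_le_iff_le_add'.mpr (h1.trans h2)
  have key1 := one_side a b ha hb rfl
  have key2 := one_side b a hb ha (by rw [← neg_sub, nnnorm_neg])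
  have hmap' : algebraMap ℝ≥0 A (‖a - b‖₊ ^ r) = algebraMap ℝ A (‖a - b‖ ^ r) := by
    rw [IsScalarTower.algebraMap_apply ℝ≥0 ℝ A]
    norm_cast
  have hsa : IsSelfAdjoint (a ^ r - b ^ r) :=
    (IsSelfAdjoint.of_nonneg CFC.rpow_nonneg).sub (IsSelfAdjoint.of_nonneg CFC.rpow_nonneg)
  refine my_norm_le_of_le_algebraMap hsa (Real.rpow_nonneg (norm_nonneg _) r) ?_ ?_
  · rw [← hmap']; exact key1
  · rw [← hmap', neg_sub]; exact key2

end LoewnerHeinz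

/-- **Hermitian operator inequality, case `0 < r ≤ 1`** (operator Hölder continuity of
fractional powers): for nonnegative selfadjoint bounded operators `A, B` on a complex
Hilbert space and any real `r ∈ (0, 1]`, `‖A^r − B^r‖ ≤ ‖A − B‖^r`. -/
theorem norm_rpow_sub_rpow_le_of_le_one
    {H : Type*} [NormedAddCommGroup H] [InnerProductSpace ℂ H] [CompleteSpace H]
    (A B : H →L[ℂ] H) (hA : IsSelfAdjoint A) (hB : IsSelfAdjoint B)
    (hA0 : 0 ≤ A) (hB0 : 0 ≤ B)
    (r : ℝ) (hr0 : 0 < r) (hr1 : r ≤ 1) :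
    ‖CFC.rpow A r - CFC.rpow B r‖ ≤ ‖A - B‖ ^ r := by
  exact my_main hA0 hB0 hr0 hr1
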